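/- Let r₀ > 0 and let u : ℝ → ℝ be strictly positive on (0, r₀] and upper semicontinuous on (0, r₀] (as a function on that set). Then there exists w : ℝ → ℝ that is continuous on (0, r₀], satisfies w t ≥ u t > 0 for every t ∈ (0, r₀], and such that the function w − u is Lebesgue integrable on (0, r₀). -/

import Mathlib

open Set MeasureTheory Filter Topology NNReal

lemma usc_bddAbove {u : ℝ → ℝ} {J : Set ℝ} (hJ : IsCompact J)
    (hu : UpperSemicontinuousOn u J) : ∃ M : ℝ, 0 ≤ M ∧ ∀ x ∈ J, u x ≤ M := by
  have h : ∀ x ∈ J, ∃ O : Set ℝ, IsOpen O ∧ x ∈ O ∧ ∀ y ∈ O ∩ J, u y < u x + 1 := by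
    intro x hx
    have := hu x hx (u x + 1) (lt_add_one _)
    rcases mem_nhdsWithin.mp this with ⟨O, hO, hxO, hOsub⟩
    exact ⟨O, hO, hxO, fun y hy => hOsub hy⟩
  choose O hOopen hxO hObnd using h
  obtain ⟨t, ht⟩ := hJ.elim_nhds_subcover' (fun x hx => O x hx)
    (fun x hx => (hOopen x hx).mem_nhds (hxO x hx))
  obtain ⟨M, hM⟩ := (t.image fun x => u x.1 + 1).exists_le
  refine ⟨max M 0, le_max_right _ _, fun y hy => ?_⟩
  rcases mem_iUnion₂.mp (ht hy) with ⟨x, hxt, hyO⟩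
  have h1 : u y < u x.1 + 1 := hObnd x.1 x.2 y ⟨hyO, hy⟩
  have h2 : u x.1 + 1 ≤ M := hM _ (Finset.mem_image_of_mem _ hxt)
  exact le_trans (le_of_lt h1) (le_trans h2 (le_max_left _ _))

lemma usc_aemeasurable {u : ℝ → ℝ} {S : Set ℝ} (hS : MeasurableSet S)
    (hu : UpperSemicontinuousOn u S) : AEMeasurable u (volume.restrict S) := by
  classical
  have hopen : ∀ c : ℝ, ∃ O : Set ℝ, IsOpen O ∧ {x ∈ S | u x < c} = S ∩ O := by
    intro c
    have h : ∀ x ∈ {x ∈ S | u x < c}, ∃ O : Set ℝ, IsOpen O ∧ x ∈ O ∧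
        ∀ y ∈ O ∩ S, u y < c := by
      rintro x ⟨hxS, hxc⟩
      rcases mem_nhdsWithin.mp (hu x hxS c hxc) with ⟨O, hO, hxO, hOsub⟩
      exact ⟨O, hO, hxO, fun y hy => hOsub hy⟩
    choose O hOopen hxO hObnd using h
    refine ⟨⋃ (x : ℝ) (hx : x ∈ {x ∈ S | u x < c}), O x hx, isOpen_iUnion fun x =>
      isOpen_iUnion fun hx => hOopen x hx, ?_⟩
    ext y
    constructor
    · rintro ⟨hyS, hyc⟩
      exact ⟨hyS, mem_iUnion₂.mpr ⟨y, ⟨hyS, hyc⟩, hxO _ _⟩⟩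
    · rintro ⟨hyS, hyO⟩
      rcases mem_iUnion₂.mp hyO with ⟨x, hx, hyOx⟩
      exact ⟨hyS, hObnd x hx y ⟨hyOx, hyS⟩⟩
  set g : ℝ → ℝ := fun t => if t ∈ S then u t else 0 with hg
  have key : ∀ c : ℝ, ∀ x, x ∈ S → (g x < c ↔ x ∈ {x ∈ S | u x < c}) := by
    intro c x hx
    simp only [hg, if_pos hx, mem_setOf_eq]
    exact ⟨fun h => ⟨hx, h⟩, fun h => h.2⟩
  have hgm : Measurable g := by
    apply measurable_of_Iio
    intro c
    obtain ⟨O, hO, hOeq⟩ := hopen c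
    by_cases h0 : (0:ℝ) < c
    · have heq : g ⁻¹' Iio c = (S ∩ O) ∪ Sᶜ := by
        ext x
        simp only [mem_preimage, mem_Iio, mem_union, mem_inter_iff, mem_compl_iff]
        by_cases hx : x ∈ S
        · rw [key c x hx, hOeq]
          exact ⟨fun h => Or.inl h, fun h => h.elim id (fun h' => absurd hx h')⟩
        · simp only [hg, if_neg hx]
          exact ⟨fun _ => Or.inr hx, fun _ => h0⟩
      rw [heq]; exact (hS.inter hO.measurableSet).union hS.compl
    · have heq : g ⁻¹' Iio c = S ∩ O := by
        ext x
        simp only [mem_preimage, mem_Iio, mem_inter_iff]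
        by_cases hx : x ∈ S
        · rw [key c x hx, hOeq]; exact Iff.rfl
        · simp only [hg, if_neg hx]
          exact ⟨fun h => absurd h h0, fun h => absurd h.1 hx⟩
      rw [heq]; exact hS.inter hO.measurableSet
  refine hgm.aemeasurable.congr ?_
  filter_upwards [ae_restrict_mem hS] with x hx
  simp [hg, hx]

lemma approx_lemma {u : ℝ → ℝ} {a b : ℝ} (hab : a ≤ b)
    (hu_pos : ∀ t ∈ Icc a b, 0 < u t)
    (hu : UpperSemicontinuousOn u (Icc a b)) {ε : ℝ} (hε : 0 < ε) :
    ∃ V : ℝ → ℝ, Continuous V ∧ (∀ t ∈ Icc a b, u t ≤ V t) ∧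
      IntegrableOn (fun t => V t - u t) (Icc a b) ∧
      ∫ t in Icc a b, (V t - u t) ≤ ε := by
  obtain ⟨M, hM0, hM⟩ := usc_bddAbove isCompact_Icc hu
  have hJne : Nonempty (Icc a b) := (nonempty_Icc.2 hab).to_subtype
  set v : ℕ → ℝ → ℝ := fun n t => ⨆ s : Icc a b, (u s - n * |t - s.1|) with hv
  have hbdd : ∀ (n : ℕ) (t : ℝ), BddAbove (range fun s : Icc a b => u s - n * |t - s.1|) := by
    intro n t
    refine ⟨M, ?_⟩
    rintro y ⟨s, rfl⟩
    have h1 : u s ≤ M := hM s.1 s.2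
    have h2 : (0:ℝ) ≤ n * |t - s.1| := by positivity
    dsimp; linarith
  have hle : ∀ (n : ℕ), ∀ t ∈ Icc a b, u t ≤ v n t := by
    intro n t ht
    have := le_ciSup (hbdd n t) (⟨t, ht⟩ : Icc a b)
    simpa using this
  have hub : ∀ (n : ℕ) (t : ℝ), v n t ≤ M := by
    intro n t
    refine ciSup_le fun s => ?_
    have h1 : u s ≤ M := hM s.1 s.2
    have h2 : (0:ℝ) ≤ n * |t - s.1| := by positivity
    linarith
  have lip : ∀ (n : ℕ) (t t' : ℝ), v n t ≤ v n t' + n * |t - t'| := by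
    intro n t t'
    refine ciSup_le fun s => ?_
    have h1 : u s.1 - n * |t' - s.1| ≤ v n t' := le_ciSup (hbdd n t') s
    have h2 : |t' - s.1| ≤ |t' - t| + |t - s.1| := abs_sub_le t' t s.1
    have h3 : |t' - t| = |t - t'| := abs_sub_comm t' t
    have h4 : (0:ℝ) ≤ n := n.cast_nonneg
    nlinarith
  have cont : ∀ n : ℕ, Continuous (v n) := by
    intro n
    have : LipschitzWith (n : ℝ≥0) (v n) := by
      rw [lipschitzWith_iff_dist_le_mul]
      intro x y
      rw [Real.dist_eq, Real.dist_eq]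
      rw [abs_sub_le_iff]
      constructor
      · have := lip n x y; push_cast; linarith
      · have := lip n y x; have h := abs_sub_comm x y; push_cast; rw [h]; linarith
    exact this.continuous
  have conv : ∀ t ∈ Icc a b, Tendsto (fun n => v n t) atTop (𝓝 (u t)) := by
    intro t ht
    rw [Metric.tendsto_atTop]
    intro ε' hε'
    have husc := hu t ht (u t + ε'/2) (by linarith)
    rcases Metric.mem_nhdsWithin_iff.mp husc with ⟨δ, hδ, hball⟩
    refine ⟨⌈M/δ⌉₊, fun n hn => ?_⟩
    have hNδ : M ≤ (⌈M/δ⌉₊ : ℝ) * δ := by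
      have := Nat.le_ceil (M/δ)
      calc M = (M/δ) * δ := by field_simp
        _ ≤ (⌈M/δ⌉₊ : ℝ) * δ := by nlinarith
    have hnδ : M ≤ (n : ℝ) * δ := by
      have : (⌈M/δ⌉₊ : ℝ) ≤ (n : ℝ) := by exact_mod_cast hn
      nlinarith
    have hupper : v n t ≤ u t + ε'/2 := by
      refine ciSup_le fun s => ?_
      by_cases hs : |t - s.1| < δ
      · have : s.1 ∈ Metric.ball t δ ∩ Icc a b := by
          constructor
          · rw [Metric.mem_ball, Real.dist_eq, abs_sub_comm]; exact hs
          · exact s.2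
        have := hball this
        have h2 : (0:ℝ) ≤ n * |t - s.1| := by positivity
        simp only [mem_setOf_eq] at this
        linarith
      · push_neg at hs
        have h1 : u s.1 ≤ M := hM s.1 s.2
        have h2 : (n:ℝ) * δ ≤ n * |t - s.1| := by
          have : (0:ℝ) ≤ n := n.cast_nonneg
          nlinarith
        have h3 : 0 < u t := hu_pos t ht
        linarith
    have hlower : u t ≤ v n t := hle n t ht
    rw [Real.dist_eq, abs_sub_lt_iff]
    constructor <;> linarith
  -- measurability of u on Icc a b
  have hum : AEMeasurable u (volume.restrict (Icc a b)) :=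
    usc_aemeasurable measurableSet_Icc hu
  set F : ℕ → ℝ → ℝ := fun n t => v n t - u t with hF
  have hFm : ∀ n, AEStronglyMeasurable (F n) (volume.restrict (Icc a b)) := fun n =>
    ((cont n).measurable.aemeasurable.sub hum).aestronglyMeasurable
  have hbound_int : IntegrableOn (fun _ : ℝ => M) (Icc a b) :=
    integrableOn_const measure_Icc_lt_top.ne
  have h_bound : ∀ n, ∀ᵐ t ∂(volume.restrict (Icc a b)), ‖F n t‖ ≤ M := by
    intro n
    filter_upwards [ae_restrict_mem measurableSet_Icc] with t ht
    have h1 : u t ≤ v n t := hle n t ht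
    have h2 : v n t ≤ M := hub n t
    have h3 : 0 < u t := hu_pos t ht
    rw [Real.norm_eq_abs, abs_le]
    constructor <;> simp only [hF] <;> linarith
  have h_lim : ∀ᵐ t ∂(volume.restrict (Icc a b)),
      Tendsto (fun n => F n t) atTop (𝓝 0) := by
    filter_upwards [ae_restrict_mem measurableSet_Icc] with t ht
    have := (conv t ht).sub_const (u t)
    simpa [hF] using this
  have htend : Tendsto (fun n => ∫ t in Icc a b, F n t) atTop (𝓝 0) := by
    have := tendsto_integral_of_dominated_convergence (fun _ => M) hFm hbound_int h_bound h_lim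
    simpa using this
  obtain ⟨n, hn⟩ := (htend.eventually (eventually_le_nhds hε)).exists
  refine ⟨v n, cont n, fun t ht => hle n t ht, ?_, hn⟩
  exact Integrable.mono' hbound_int (hFm n) (h_bound n)

theorem continuous_integrable_majorant
    (r₀ : ℝ) (hr₀ : 0 < r₀) (u : ℝ → ℝ)
    (hu_pos : ∀ t ∈ Ioc (0:ℝ) r₀, 0 < u t)
    (hu_usc : UpperSemicontinuousOn u (Ioc 0 r₀)) :
    ∃ w : ℝ → ℝ, ContinuousOn w (Ioc 0 r₀) ∧
      (∀ t ∈ Ioc (0:ℝ) r₀, 0 < u t ∧ u t ≤ w t) ∧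
      IntegrableOn (fun t => w t - u t) (Ioo 0 r₀) := by
  classical
  set x : ℝ → ℝ := fun t => Real.logb 2 (r₀ / t) with hxd
  set χ : ℕ → ℝ → ℝ := fun k t => max 0 (1 - |x t - k|) with hχd
  have hlt : ∀ t : ℝ, 0 < t → ∀ m : ℕ, (x t < m ↔ r₀ / 2 ^ m < t) := by
    intro t ht m
    rw [hxd]
    simp only
    rw [Real.logb_lt_iff_lt_rpow one_lt_two (div_pos hr₀ ht), Real.rpow_natCast]
    rw [div_lt_iff₀ ht, div_lt_iff₀ (pow_pos two_pos m)]
    constructor <;> intro h <;> nlinarith [mul_comm t ((2:ℝ)^m)]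
  have hχ01 : ∀ k t, 0 ≤ χ k t := fun k t => le_max_left _ _
  have hχle1 : ∀ k t, χ k t ≤ 1 :=
    fun k t => max_le zero_le_one (by linarith [abs_nonneg (x t - k)])
  have hχcont : ∀ (k : ℕ) (t : ℝ), 0 < t → ContinuousAt (χ k) t := by
    intro k t ht
    have hc : ContinuousAt x t := by
      have h1 : ContinuousAt (fun t : ℝ => r₀ / t) t :=
        continuousAt_const.div continuousAt_id (ne_of_gt ht)
      exact (Real.continuousAt_logb (ne_of_gt (div_pos hr₀ ht))).comp h1
    exact continuousAt_const.max (continuousAt_const.sub ((hc.sub continuousAt_const).abs))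
  have hxm : Measurable x := by
    have : x = fun t => Real.log (r₀ / t) / Real.log 2 := by
      funext t; rw [hxd]; simp only [Real.logb]
    rw [this]
    exact (Real.measurable_log.comp (measurable_const.div measurable_id)).div_const _
  have hχm : ∀ k, Measurable (χ k) :=
    fun k => measurable_const.max (measurable_const.sub ((hxm.sub measurable_const).abs))
  have hsupp : ∀ (k : ℕ) (t : ℝ), 0 < t → χ k t ≠ 0 → r₀ / 2 ^ (k + 1) < t := by
    intro k t ht hne
    have h1 : |x t - k| < 1 := by
      by_contra h
      push_neg at h
      exact hne (max_eq_left (by linarith))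
    have h2 : x t < (k : ℝ) + 1 := by
      have := (abs_lt.mp h1).2; linarith
    exact (hlt t ht (k + 1)).mp (by push_cast; linarith)
  have hvanish : ∀ (N k : ℕ), N + 1 ≤ k → ∀ t : ℝ, 0 < t → r₀ / 2 ^ N < t → χ k t = 0 := by
    intro N k hk t ht htO
    have h1 : x t < N := (hlt t ht N).mpr htO
    have h2 : (k : ℝ) - x t ≤ |x t - k| := by
      rw [abs_sub_comm]; exact le_abs_self _
    have h3 : (N : ℝ) + 1 ≤ k := by exact_mod_cast hk
    exact max_eq_left (by linarith)
  have hpart : ∀ t ∈ Ioc (0:ℝ) r₀,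
      (∀ k : ℕ, k ≠ ⌊x t⌋₊ → k ≠ ⌊x t⌋₊ + 1 → χ k t = 0) ∧
        χ ⌊x t⌋₊ t + χ (⌊x t⌋₊ + 1) t = 1 := by
    intro t ht
    have hx0 : 0 ≤ x t := Real.logb_nonneg one_lt_two ((one_le_div ht.1).mpr ht.2)
    have hfl : (⌊x t⌋₊ : ℝ) ≤ x t := Nat.floor_le hx0
    have hfl2 : x t < ⌊x t⌋₊ + 1 := Nat.lt_floor_add_one _
    constructor
    · intro k hk1 hk2
      rcases lt_or_gt_of_ne hk1 with h | h
      · -- k < k₀, so k + 1 ≤ k₀, x t - k ≥ 1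
        have : (k : ℝ) + 1 ≤ ⌊x t⌋₊ := by exact_mod_cast h
        have h2 : (1:ℝ) ≤ x t - k := by linarith
        have h3 : x t - k ≤ |x t - k| := le_abs_self _
        exact max_eq_left (by linarith)
      · -- k > k₀, k ≠ k₀+1, so k ≥ k₀+2
        have hk3 : ⌊x t⌋₊ + 2 ≤ k := by omega
        have : (⌊x t⌋₊ : ℝ) + 2 ≤ k := by exact_mod_cast hk3
        have h2 : (1:ℝ) ≤ (k : ℝ) - x t := by linarith
        have h3 : (k : ℝ) - x t ≤ |x t - k| := by rw [abs_sub_comm]; exact le_abs_self _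
        exact max_eq_left (by linarith)
    · have e1 : χ ⌊x t⌋₊ t = 1 - (x t - ⌊x t⌋₊) := by
        rw [hχd]; simp only
        rw [abs_of_nonneg (by linarith)]
        exact max_eq_right (by linarith)
      have e2 : χ (⌊x t⌋₊ + 1) t = x t - ⌊x t⌋₊ := by
        rw [hχd]; simp only
        have hc : ((⌊x t⌋₊ + 1 : ℕ) : ℝ) = (⌊x t⌋₊ : ℝ) + 1 := by push_cast; ring
        rw [hc, abs_of_nonpos (by linarith)]
        have : 1 - -(x t - ((⌊x t⌋₊ : ℝ) + 1)) = x t - ⌊x t⌋₊ := by ring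
        rw [this]
        exact max_eq_right (by linarith)
      rw [e1, e2]; ring
  -- choose continuous majorants on the intervals Icc (r₀/2^(k+1)) r₀
  have happrox : ∀ k : ℕ, ∃ V : ℝ → ℝ, Continuous V ∧
      (∀ t ∈ Icc (r₀ / 2 ^ (k + 1)) r₀, u t ≤ V t) ∧
      IntegrableOn (fun t => V t - u t) (Icc (r₀ / 2 ^ (k + 1)) r₀) ∧
      ∫ t in Icc (r₀ / 2 ^ (k + 1)) r₀, (V t - u t) ≤ (1/2 : ℝ) ^ k := by
    intro k
    have hsub : Icc (r₀ / 2 ^ (k + 1)) r₀ ⊆ Ioc 0 r₀ := by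
      intro t ht
      exact ⟨lt_of_lt_of_le (by positivity) ht.1, ht.2⟩
    have hab : r₀ / 2 ^ (k + 1) ≤ r₀ := by
      rw [div_le_iff₀ (by positivity)]
      nlinarith [one_le_pow₀ (a := (2:ℝ)) one_le_two (n := k+1)]
    exact approx_lemma hab (fun t ht => hu_pos t (hsub ht)) (hu_usc.mono hsub)
      (by positivity)
  choose V hVc hVge hVint hVle using happrox
  set w : ℝ → ℝ := fun t => ∑' k, χ k t * V k t with hwd
  have hsummable : ∀ t ∈ Ioc (0:ℝ) r₀, ∀ g : ℕ → ℝ, Summable (fun k => χ k t * g k) := by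
    intro t ht g
    apply summable_of_ne_finset_zero (s := ({⌊x t⌋₊, ⌊x t⌋₊ + 1} : Finset ℕ))
    intro k hk
    simp only [Finset.mem_insert, Finset.mem_singleton, not_or] at hk
    rw [(hpart t ht).1 k hk.1 hk.2, zero_mul]
  have hsum1 : ∀ t ∈ Ioc (0:ℝ) r₀, ∑' k, χ k t = 1 := by
    intro t ht
    rw [tsum_eq_sum (s := ({⌊x t⌋₊, ⌊x t⌋₊ + 1} : Finset ℕ))
      (fun k hk => by
        simp only [Finset.mem_insert, Finset.mem_singleton, not_or] at hk
        exact (hpart t ht).1 k hk.1 hk.2)]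
    rw [Finset.sum_insert (by simp), Finset.sum_singleton]
    exact (hpart t ht).2
  have hdiff : ∀ t ∈ Ioc (0:ℝ) r₀, w t - u t = ∑' k, χ k t * (V k t - u t) := by
    intro t ht
    have h1 : Summable (fun k => χ k t * V k t) := hsummable t ht _
    have h2 : Summable (fun k => χ k t * u t) := hsummable t ht _
    have h3 : u t = ∑' k, χ k t * u t := by
      rw [_root_.tsum_mul_right, hsum1 t ht, one_mul]
    calc w t - u t = (∑' k, χ k t * V k t) - ∑' k, χ k t * u t := by
          rw [hwd]; simp only; rw [← h3]
      _ = ∑' k, (χ k t * V k t - χ k t * u t) := (Summable.tsum_sub h1 h2).symm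
      _ = ∑' k, χ k t * (V k t - u t) := by
          congr 1; funext k; ring
  have hterm : ∀ t ∈ Ioc (0:ℝ) r₀, ∀ k : ℕ, 0 ≤ χ k t * (V k t - u t) := by
    intro t ht k
    by_cases hz : χ k t = 0
    · rw [hz, zero_mul]
    · have h1 : r₀ / 2 ^ (k + 1) < t := hsupp k t ht.1 hz
      have h2 : u t ≤ V k t := hVge k t ⟨le_of_lt h1, ht.2⟩
      exact mul_nonneg (hχ01 k t) (by linarith)
  have hwge : ∀ t ∈ Ioc (0:ℝ) r₀, u t ≤ w t := by
    intro t ht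
    have : 0 ≤ w t - u t := by
      rw [hdiff t ht]
      exact tsum_nonneg (hterm t ht)
    linarith
  -- continuity
  have hwcont : ContinuousOn w (Ioc 0 r₀) := by
    intro t₀ ht₀
    set N : ℕ := ⌊x t₀⌋₊ + 1 with hNd
    have hx0 : 0 ≤ x t₀ := Real.logb_nonneg one_lt_two ((one_le_div ht₀.1).mpr ht₀.2)
    have hN : x t₀ < N := by
      have := Nat.lt_floor_add_one (x t₀)
      push_cast [hNd]; linarith
    have ht₀O : r₀ / 2 ^ N < t₀ := (hlt t₀ ht₀.1 N).mp hN
    have hposO : ∀ t : ℝ, t ∈ Ioi (r₀ / 2 ^ N) → 0 < t :=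
      fun t ht => lt_trans (by positivity) ht
    have heq : ∀ t ∈ Ioi (r₀ / 2 ^ N), w t = ∑ k ∈ Finset.range (N + 1), χ k t * V k t := by
      intro t htO
      rw [hwd]; simp only
      apply tsum_eq_sum
      intro k hk
      rw [Finset.mem_range, not_lt] at hk
      rw [hvanish N k hk t (hposO t htO) htO, zero_mul]
    have hsumcont : ContinuousAt (fun t => ∑ k ∈ Finset.range (N + 1), χ k t * V k t) t₀ :=
      tendsto_finset_sum _ fun k _ => (hχcont k t₀ ht₀.1).mul (hVc k).continuousAt
    have : ContinuousAt w t₀ := by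
      refine hsumcont.congr ?_
      filter_upwards [isOpen_Ioi.mem_nhds ht₀O] with t ht
      exact (heq t ht).symm
    exact this.continuousWithinAt
  -- integrability
  have hum : AEMeasurable u (volume.restrict (Ioo 0 r₀)) :=
    usc_aemeasurable measurableSet_Ioo (hu_usc.mono Ioo_subset_Ioc_self)
  have haesm : AEStronglyMeasurable (fun t => w t - u t) (volume.restrict (Ioo 0 r₀)) := by
    have hw' : AEMeasurable w (volume.restrict (Ioo 0 r₀)) :=
      ((hwcont.mono Ioo_subset_Ioc_self).aemeasurable measurableSet_Ioo)
    exact (hw'.sub hum).aestronglyMeasurable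
  set g : ℕ → ℝ → ℝ := fun k t => χ k t * (V k t - u t) with hgd
  have hgm : ∀ k : ℕ, AEMeasurable (fun t => ENNReal.ofReal (g k t))
      (volume.restrict (Ioo 0 r₀)) := fun k =>
    ENNReal.measurable_ofReal.comp_aemeasurable
      ((hχm k).aemeasurable.mul ((hVc k).measurable.aemeasurable.sub hum))
  have hbnd : ∀ k : ℕ, ∫⁻ t in Ioo (0:ℝ) r₀, ENNReal.ofReal (g k t) ≤
      ENNReal.ofReal ((1/2:ℝ)^k) := by
    intro k
    have step1 : ∫⁻ t in Ioo (0:ℝ) r₀, ENNReal.ofReal (g k t) ≤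
        ∫⁻ t in Ioo (0:ℝ) r₀, (Icc (r₀ / 2 ^ (k+1)) r₀).indicator
          (fun t => ENNReal.ofReal (V k t - u t)) t := by
      apply lintegral_mono_ae
      filter_upwards [ae_restrict_mem measurableSet_Ioo] with t ht
      by_cases hI : t ∈ Icc (r₀ / 2 ^ (k+1)) r₀
      · rw [indicator_of_mem hI]
        apply ENNReal.ofReal_le_ofReal
        have h1 : u t ≤ V k t := hVge k t hI
        simp only [hgd]
        nlinarith [hχ01 k t, hχle1 k t]
      · have hz : χ k t = 0 := by
          by_contra hz
          exact hI ⟨le_of_lt (hsupp k t ht.1 hz), le_of_lt ht.2⟩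
        rw [hgd]
        simp only [hz, zero_mul, indicator_of_notMem hI, ENNReal.ofReal_zero, le_refl]
    have step2 : ∫⁻ t in Ioo (0:ℝ) r₀, (Icc (r₀ / 2 ^ (k+1)) r₀).indicator
          (fun t => ENNReal.ofReal (V k t - u t)) t ≤
        ∫⁻ t, (Icc (r₀ / 2 ^ (k+1)) r₀).indicator
          (fun t => ENNReal.ofReal (V k t - u t)) t :=
      setLIntegral_le_lintegral _ _
    have step3 : ∫⁻ t, (Icc (r₀ / 2 ^ (k+1)) r₀).indicator
          (fun t => ENNReal.ofReal (V k t - u t)) t =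
        ∫⁻ t in Icc (r₀ / 2 ^ (k+1)) r₀, ENNReal.ofReal (V k t - u t) :=
      lintegral_indicator measurableSet_Icc _
    have step4 : ∫⁻ t in Icc (r₀ / 2 ^ (k+1)) r₀, ENNReal.ofReal (V k t - u t) =
        ENNReal.ofReal (∫ t in Icc (r₀ / 2 ^ (k+1)) r₀, (V k t - u t)) := by
      rw [MeasureTheory.ofReal_integral_eq_lintegral_ofReal (hVint k)]
      filter_upwards [ae_restrict_mem measurableSet_Icc] with t ht
      have := hVge k t ht
      simp only [Pi.zero_apply]
      linarith
    calc ∫⁻ t in Ioo (0:ℝ) r₀, ENNReal.ofReal (g k t) ≤ _ := step1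
      _ ≤ _ := step2
      _ = _ := step3
      _ = _ := step4
      _ ≤ ENNReal.ofReal ((1/2:ℝ)^k) := ENNReal.ofReal_le_ofReal (hVle k)
  have hfin : (∫⁻ t in Ioo (0:ℝ) r₀, ENNReal.ofReal (w t - u t)) < ⊤ := by
    have heq : ∫⁻ t in Ioo (0:ℝ) r₀, ENNReal.ofReal (w t - u t) =
        ∫⁻ t in Ioo (0:ℝ) r₀, ∑' k : ℕ, ENNReal.ofReal (g k t) := by
      apply lintegral_congr_ae
      filter_upwards [ae_restrict_mem measurableSet_Ioo] with t ht
      have ht' : t ∈ Ioc (0:ℝ) r₀ := Ioo_subset_Ioc_self ht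
      rw [hdiff t ht']
      exact ENNReal.ofReal_tsum_of_nonneg (hterm t ht')
        (hsummable t ht' (fun k => V k t - u t))
    rw [heq, lintegral_tsum hgm]
    refine lt_of_le_of_lt (ENNReal.tsum_le_tsum hbnd) ?_
    have h2 : ∀ k : ℕ, ENNReal.ofReal ((1/2:ℝ)^k) = (ENNReal.ofReal (1/2))^k :=
      fun k => ENNReal.ofReal_pow (by norm_num) k
    simp_rw [h2]
    rw [ENNReal.tsum_geometric]
    refine ENNReal.inv_lt_top.mpr ?_
    rw [ENNReal.ofReal_div_of_pos (by norm_num)]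
    simp only [ENNReal.ofReal_one, ENNReal.ofReal_ofNat]
    rw [tsub_pos_iff_lt]
    exact ENNReal.half_lt_self one_ne_zero ENNReal.one_ne_top
  have hint : IntegrableOn (fun t => w t - u t) (Ioo 0 r₀) := by
    refine ⟨haesm, ?_⟩
    rw [hasFiniteIntegral_iff_ofReal ?_]
    · exact hfin
    · filter_upwards [ae_restrict_mem measurableSet_Ioo] with t ht
      have ht' : t ∈ Ioc (0:ℝ) r₀ := Ioo_subset_Ioc_self ht
      have := hwge t ht'
      simp only [Pi.zero_apply]
      linarith
  exact ⟨w, hwcont, fun t ht => ⟨hu_pos t ht, hwge t ht⟩, hint⟩
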